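/- Let G be a multigraph whose underlying simple graph is a cycle on 2t+1 vertices (t ≥ 1) and which is critical and elementary with χ'(G) = k+1. If every edge multiplicity x_i ≥ 2 and Q = L(G), then γ̃_3(Q) ≥ 5X/(4t+2), where X is the total number of edges of G and γ̃_3(Q) = max over subgraphs H of Q of γ_3(H). -/

import Mathlib

open scoped Classical

/-- A loopless multigraph on vertex type `V` with edge type `E`. -/
structure Multigraph (V : Type*) (E : Type*) where
  ends : E → Sym2 V
  loopless : ∀ e, ¬ (ends e).IsDiag

namespace Multigraph

variable {V E : Type*} (G : Multigraph V E)

/-- Two edges are adjacent if they are distinct and share an endpoint. -/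
def EdgeAdj (e f : E) : Prop := e ≠ f ∧ ∃ v, v ∈ G.ends e ∧ v ∈ G.ends f

/-- A proper `k`-edge-coloring. -/
def IsProperEdgeColoring {k : ℕ} (c : E → Fin k) : Prop :=
  ∀ e f, G.EdgeAdj e f → c e ≠ c f

/-- The chromatic index: least `k` admitting a proper `k`-edge-coloring. -/
noncomputable def chromIndex : ℕ :=
  sInf {k | ∃ c : E → Fin k, G.IsProperEdgeColoring c}

/-- The degree of a vertex (counting multiplicities). -/
noncomputable def degree [Fintype E] (v : V) : ℕ :=
  (Finset.univ.filter (fun e => v ∈ G.ends e)).card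

/-- Maximum degree. -/
noncomputable def maxDegree [Fintype V] [Fintype E] : ℕ :=
  Finset.univ.sup (fun v => G.degree v)

/-- Ceiling division. -/
def cdiv (a b : ℕ) : ℕ := (a + b - 1) / b

/-- The Goldberg--Seymour density bound `W(G)`: the max over subgraphs `H`
(given by a vertex set and a set of edges with both ends in it) with at least
two vertices of `⌈|E(H)| / ⌊|V(H)|/2⌋⌉`. -/
noncomputable def W [Fintype V] [Fintype E] : ℕ :=
  Finset.univ.sup (fun p : Finset V × Finset E =>
    if 2 ≤ p.1.card ∧ ∀ e ∈ p.2, ∀ v ∈ G.ends e, v ∈ p.1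
    then cdiv p.2.card (p.1.card / 2) else 0)

/-- Delete an edge. -/
def deleteEdge (e0 : E) : Multigraph V {f : E // f ≠ e0} where
  ends := fun f => G.ends f.1
  loopless := fun f => G.loopless f.1

/-- A graph is (edge-)critical if deleting any edge decreases the chromatic index. -/
noncomputable def Critical [Fintype V] [Fintype E] : Prop :=
  ∀ e0 : E, (G.deleteEdge e0).chromIndex < G.chromIndex

/-- A graph is elementary if its chromatic index equals `W(G)`. -/
noncomputable def Elementary [Fintype V] [Fintype E] : Prop :=
  G.chromIndex = G.W

/-- The line graph of a multigraph, as a simple graph on the edge type. -/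
def lineGraph : SimpleGraph E where
  Adj := G.EdgeAdj
  symm := ⟨by
    rintro e f ⟨hne, v, hv1, hv2⟩
    exact ⟨hne.symm, v, hv2, hv1⟩⟩
  loopless := ⟨fun e h => h.1 rfl⟩

/-- The multiplicity of the pair `u v`: number of edges joining them. -/
noncomputable def mul [Fintype E] (u v : V) : ℕ :=
  (Finset.univ.filter (fun e => G.ends e = s(u, v))).card

/-- The maximum edge multiplicity. -/
noncomputable def maxMul [Fintype V] [Fintype E] : ℕ :=
  Finset.univ.sup (fun p : V × V => G.mul p.1 p.2)

end Multigraph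

open scoped Classical

namespace StmtDefs

/-- omega(v): the size of a largest clique containing v. -/
noncomputable def cliqueAt {V : Type*} (Q : SimpleGraph V) (v : V) : ℕ :=
  sSup {n | ∃ s : Finset V, Q.IsNClique n s ∧ v ∈ s}

/-- The degree of a vertex of a simple graph. -/
noncomputable def ndeg {V : Type*} (Q : SimpleGraph V) (v : V) : ℕ :=
  Nat.card {w | Q.Adj v w}

/-- The average of (d(v) + omega(v) + 1)/2 over a set X of vertices. -/
noncomputable def gammaVal {V : Type*} (Q : SimpleGraph V) (X : Finset V) : ℝ :=
  (X.card : ℝ)⁻¹ * ∑ v ∈ X, ((ndeg Q v : ℝ) + (cliqueAt Q v : ℝ) + 1) / 2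

/-- A maximal clique. -/
def IsMaxClique {V : Type*} (Q : SimpleGraph V) (s : Finset V) : Prop :=
  Q.IsClique ↑s ∧ ∀ t : Finset V, Q.IsClique ↑t → s ⊆ t → s = t

/-- gamma_r(Q): max over cliques of size exactly r and maximal cliques of size
less than r of the average of (d(v) + omega(v) + 1)/2. -/
noncomputable def gamma {V : Type*} (Q : SimpleGraph V) (r : ℕ) : ℝ :=
  sSup {x | ∃ X : Finset V,
    ((Q.IsClique ↑X ∧ X.card = r) ∨ (IsMaxClique Q X ∧ X.card < r)) ∧
    x = gammaVal Q X}

/-- gamma-tilde_r(Q): max of gamma_r over all subgraphs of Q. -/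
noncomputable def gammaTilde {V : Type*} (Q : SimpleGraph V) (r : ℕ) : ℝ :=
  sSup {x | ∃ (s : Set V) (H : SimpleGraph s), H ≤ Q.induce s ∧ x = gamma H r}

/-- The chromatic number of a simple graph, as a natural number. -/
noncomputable def sgChrom {V : Type*} (Q : SimpleGraph V) : ℕ :=
  sInf {n | Q.Colorable n}

/-- The clique number of a simple graph. -/
noncomputable def cliqueNum {V : Type*} (Q : SimpleGraph V) : ℕ :=
  sSup {n | ∃ s : Finset V, Q.IsNClique n s}

/-- The maximum degree of a finite simple graph. -/
noncomputable def sgMaxDegree {V : Type*} [Fintype V] (Q : SimpleGraph V) : ℕ :=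
  Finset.univ.sup (fun v => Nat.card {w | Q.Adj v w})

end StmtDefs

open StmtDefs


section Stmt14Aux

variable {t : ℕ}

private lemma fin_succ_ne (ht : 1 ≤ t) (a : Fin (2*t+1)) : a + 1 ≠ a := by
  intro h
  have h2 := congrArg Fin.val h
  have hone : ((1 : Fin (2*t+1))).val = 1 := by
    rw [Fin.val_one']; exact Nat.mod_eq_of_lt (by omega)
  rw [Fin.val_add, hone] at h2
  have ha := a.isLt
  rcases Nat.lt_or_ge (a.val + 1) (2*t+1) with h3 | h3
  · rw [Nat.mod_eq_of_lt h3] at h2; omega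
  · have h4 : a.val + 1 = 2*t+1 := by omega
    rw [h4, Nat.mod_self] at h2; omega

private lemma fin_succ_succ_ne (ht : 1 ≤ t) (a : Fin (2*t+1)) : a + 1 + 1 ≠ a := by
  intro h
  have h2 := congrArg Fin.val h
  have hone : ((1 : Fin (2*t+1))).val = 1 := by
    rw [Fin.val_one']; exact Nat.mod_eq_of_lt (by omega)
  rw [Fin.val_add, Fin.val_add, hone] at h2
  have ha := a.isLt
  rcases Nat.lt_or_ge (a.val + 1) (2*t+1) with h3 | h3
  · rw [Nat.mod_eq_of_lt h3] at h2
    rcases Nat.lt_or_ge (a.val + 1 + 1) (2*t+1) with h5 | h5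
    · rw [Nat.mod_eq_of_lt h5] at h2; omega
    · have h6 : a.val + 1 + 1 = 2*t+1 := by omega
      rw [h6, Nat.mod_self] at h2; omega
  · have h4 : a.val + 1 = 2*t+1 := by omega
    rw [h4, Nat.mod_self] at h2
    rw [Nat.mod_eq_of_lt (by omega)] at h2; omega

variable {x : Fin (2*t+1) → ℕ}

private lemma bundle_ncard (c : Fin (2*t+1)) :
    {w : (i : Fin (2*t+1)) × Fin (x i) | w.1 = c}.ncard = x c := by
  have h : {w : (i : Fin (2*t+1)) × Fin (x i) | w.1 = c}
      = Set.range (fun b : Fin (x c) => (⟨c, b⟩ : (i : Fin (2*t+1)) × Fin (x i))) := by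
    ext ⟨i, b⟩
    simp only [Set.mem_setOf_eq, Set.mem_range]
    constructor
    · rintro rfl; exact ⟨b, rfl⟩
    · rintro ⟨b', hb⟩; cases hb; rfl
  rw [h, ← Nat.card_coe_set_eq, Nat.card_range_of_injective sigma_mk_injective,
    Nat.card_eq_fintype_card, Fintype.card_fin]

private lemma lineAdj_iff (G : Multigraph (Fin (2*t+1)) ((i : Fin (2*t+1)) × Fin (x i)))
    (hG : ∀ p, G.ends p = s(p.1, p.1 + 1))
    (u w : (i : Fin (2*t+1)) × Fin (x i)) :
    G.lineGraph.Adj u w ↔ u ≠ w ∧ (u.1 = w.1 ∨ u.1 = w.1 + 1 ∨ w.1 = u.1 + 1) := by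
  constructor
  · rintro ⟨hne, v, hv1, hv2⟩
    rw [hG] at hv1 hv2
    rw [Sym2.mem_iff] at hv1 hv2
    refine ⟨hne, ?_⟩
    rcases hv1 with h1 | h1 <;> rcases hv2 with h2 | h2
    · exact Or.inl (h1.symm.trans h2)
    · exact Or.inr (Or.inl (h1.symm.trans h2))
    · exact Or.inr (Or.inr (h2.symm.trans h1))
    · exact Or.inl (add_right_cancel (h1.symm.trans h2))
  · rintro ⟨hne, h | h | h⟩
    · exact ⟨hne, u.1, by rw [hG, Sym2.mem_iff]; exact Or.inl rfl,
        by rw [hG, Sym2.mem_iff]; exact Or.inl h⟩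
    · exact ⟨hne, u.1, by rw [hG, Sym2.mem_iff]; exact Or.inl rfl,
        by rw [hG, Sym2.mem_iff]; exact Or.inr h⟩
    · exact ⟨hne, w.1, by rw [hG, Sym2.mem_iff]; exact Or.inr h,
        by rw [hG, Sym2.mem_iff]; exact Or.inl rfl⟩

private lemma gammaVal_le_card {α : Type*} [Fintype α] (Q : SimpleGraph α) (s : Finset α) :
    gammaVal Q s ≤ (Fintype.card α : ℝ) + 1 := by
  have hterm : ∀ v : α, ((ndeg Q v : ℝ) + (cliqueAt Q v : ℝ) + 1) / 2
      ≤ (Fintype.card α : ℝ) + 1 := by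
    intro v
    have h1 : ndeg Q v ≤ Fintype.card α := by
      rw [ndeg, ← Nat.card_eq_fintype_card]
      exact Nat.card_le_card_of_injective Subtype.val Subtype.val_injective
    have h2 : cliqueAt Q v ≤ Fintype.card α := by
      apply csSup_le'
      rintro m ⟨s', hs', -⟩
      rw [← hs'.card_eq]
      exact s'.card_le_univ
    have h1' : (ndeg Q v : ℝ) ≤ Fintype.card α := by exact_mod_cast h1
    have h2' : (cliqueAt Q v : ℝ) ≤ Fintype.card α := by exact_mod_cast h2
    linarith
  rcases Finset.eq_empty_or_nonempty s with rfl | hs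
  · simp only [gammaVal, Finset.sum_empty, mul_zero]
    positivity
  · rw [gammaVal, inv_mul_le_iff₀ (by exact_mod_cast Finset.card_pos.mpr hs)]
    calc ∑ v ∈ s, ((ndeg Q v : ℝ) + (cliqueAt Q v : ℝ) + 1) / 2
        ≤ s.card • ((Fintype.card α : ℝ) + 1) :=
          Finset.sum_le_card_nsmul _ _ _ (fun v _ => hterm v)
      _ = (s.card : ℝ) * ((Fintype.card α : ℝ) + 1) := by rw [nsmul_eq_mul]

private lemma gamma_le_card {α : Type*} [Fintype α] (Q : SimpleGraph α) (r : ℕ) :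
    gamma Q r ≤ (Fintype.card α : ℝ) + 1 := by
  apply Real.sSup_le
  · rintro y ⟨s, -, rfl⟩
    exact gammaVal_le_card Q s
  · positivity

end Stmt14Aux

theorem stmt14 (t : ℕ) (ht : 1 ≤ t) (x : Fin (2 * t + 1) → ℕ)
    (hx : ∀ i, 2 ≤ x i)
    (G : Multigraph (Fin (2 * t + 1)) ((i : Fin (2 * t + 1)) × Fin (x i)))
    (hG : ∀ p, G.ends p = s(p.1, p.1 + 1))
    (k : ℕ) (hchi : G.chromIndex = k + 1)
    (hcrit : G.Critical) (helem : G.Elementary)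
    (X : ℕ) (hX : X = ∑ i, x i) :
    (5 * X : ℝ) / (4 * t + 2) ≤ gammaTilde G.lineGraph 3 := by
  classical
  set Q := G.lineGraph with hQ
  set H : SimpleGraph (Set.univ : Set ((i : Fin (2 * t + 1)) × Fin (x i))) :=
    Q.induce Set.univ with hH
  -- degree transfer
  have hndeg_eq : ∀ v : (Set.univ : Set ((i : Fin (2 * t + 1)) × Fin (x i))),
      ndeg H v = Nat.card {w : (i : Fin (2 * t + 1)) × Fin (x i) | Q.Adj v.1 w} := by
    intro v
    exact Nat.card_congr (Equiv.subtypeEquiv (Equiv.Set.univ _) (fun w => Iff.rfl))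
  -- degree lower bound
  have hdeg_ge : ∀ (i : Fin (2*t+1)) (u : (i : Fin (2 * t + 1)) × Fin (x i)), u.1 = i + 1 →
      x i + x (i+1) + x (i+1+1) ≤ Nat.card {w : (i : Fin (2 * t + 1)) × Fin (x i) | Q.Adj u w} + 1 := by
    intro i u hu
    have hsub : ({w : (i : Fin (2 * t + 1)) × Fin (x i) | w.1 = i}
        ∪ ({w : (i : Fin (2 * t + 1)) × Fin (x i) | w.1 = i+1} \ {u})
        ∪ {w : (i : Fin (2 * t + 1)) × Fin (x i) | w.1 = i+1+1})
        ⊆ {w : (i : Fin (2 * t + 1)) × Fin (x i) | Q.Adj u w} := by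
      rintro w ((hw | ⟨hw, hwu⟩) | hw)
      · refine (lineAdj_iff G hG u w).mpr ⟨?_, Or.inr (Or.inl ?_)⟩
        · intro he
          exact fin_succ_ne ht i (by rw [← hu, he, hw])
        · rw [hu, hw]
      · refine (lineAdj_iff G hG u w).mpr ⟨?_, Or.inl (hu.trans hw.symm)⟩
        exact fun h => hwu (by rw [h]; rfl)
      · refine (lineAdj_iff G hG u w).mpr ⟨?_, Or.inr (Or.inr (by rw [hw, hu]))⟩
        intro he
        exact fin_succ_ne ht (i+1) (by rw [← hw, ← he, hu])
    have d1 : Disjoint {w : (i : Fin (2 * t + 1)) × Fin (x i) | w.1 = i}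
        ({w : (i : Fin (2 * t + 1)) × Fin (x i) | w.1 = i+1} \ {u}) := by
      rw [Set.disjoint_left]
      rintro w hw ⟨hw2, -⟩
      exact fin_succ_ne ht i (hw2.symm.trans hw)
    have d2 : Disjoint ({w : (i : Fin (2 * t + 1)) × Fin (x i) | w.1 = i}
        ∪ ({w : (i : Fin (2 * t + 1)) × Fin (x i) | w.1 = i+1} \ {u}))
        {w : (i : Fin (2 * t + 1)) × Fin (x i) | w.1 = i+1+1} := by
      rw [Set.disjoint_left]
      rintro w (hw | ⟨hw, -⟩) hw2
      · exact fin_succ_succ_ne ht i (hw2.symm.trans hw)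
      · exact fin_succ_ne ht (i+1) (hw2.symm.trans hw)
    have hB : (({w : (i : Fin (2 * t + 1)) × Fin (x i) | w.1 = i+1}) \ {u}).ncard
        = x (i+1) - 1 := by
      rw [Set.ncard_diff_singleton_of_mem (show u ∈ _ from hu), bundle_ncard]
    have hcard : (({w : (i : Fin (2 * t + 1)) × Fin (x i) | w.1 = i}
        ∪ ({w : (i : Fin (2 * t + 1)) × Fin (x i) | w.1 = i+1} \ {u}))
        ∪ {w : (i : Fin (2 * t + 1)) × Fin (x i) | w.1 = i+1+1}).ncard
        = x i + (x (i+1) - 1) + x (i+1+1) := by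
      rw [Set.ncard_union_eq d2, Set.ncard_union_eq d1, bundle_ncard, hB, bundle_ncard]
    have hle := Set.ncard_le_ncard hsub (Set.toFinite _)
    rw [hcard] at hle
    rw [Nat.card_coe_set_eq]
    have h2 := hx (i+1)
    omega
  -- clique lower bound
  have hclique_ge : ∀ (c : Fin (2*t+1)) (v : (Set.univ : Set ((i : Fin (2 * t + 1)) × Fin (x i)))),
      v.1.1 = c → x c + x (c+1) ≤ cliqueAt H v := by
    intro c v hv
    have hcardK : (Set.toFinset {w : (Set.univ : Set ((i : Fin (2 * t + 1)) × Fin (x i))) |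
        w.1.1 = c ∨ w.1.1 = c + 1}).card = x c + x (c+1) := by
      rw [← Set.ncard_eq_toFinset_card']
      have he : {w : (Set.univ : Set ((i : Fin (2 * t + 1)) × Fin (x i))) |
          w.1.1 = c ∨ w.1.1 = c + 1}.ncard
          = {w : (i : Fin (2 * t + 1)) × Fin (x i) | w.1 = c ∨ w.1 = c + 1}.ncard := by
        rw [← Nat.card_coe_set_eq, ← Nat.card_coe_set_eq]
        exact Nat.card_congr (Equiv.subtypeEquiv (Equiv.Set.univ _) (fun w => Iff.rfl))
      rw [he, Set.setOf_or, Set.ncard_union_eq ?dis, bundle_ncard, bundle_ncard]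
      case dis =>
        rw [Set.disjoint_left]
        rintro w hw hw2
        exact fin_succ_ne ht c (hw.symm.trans hw2 : c = c + 1).symm
    have hcl : H.IsClique ↑(Set.toFinset {w : (Set.univ : Set ((i : Fin (2 * t + 1)) × Fin (x i))) |
        w.1.1 = c ∨ w.1.1 = c + 1}) := by
      intro a ha b hb hne
      rw [Finset.mem_coe, Set.mem_toFinset] at ha hb
      have hne' : a.1 ≠ b.1 := fun h => hne (Subtype.ext h)
      show Q.Adj a.1 b.1
      refine (lineAdj_iff G hG _ _).mpr ⟨hne', ?_⟩
      rcases ha with ha | ha <;> rcases hb with hb | hb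
      · exact Or.inl (ha.trans hb.symm)
      · exact Or.inr (Or.inr (by rw [hb, ha]))
      · exact Or.inr (Or.inl (by rw [ha, hb]))
      · exact Or.inl (ha.trans hb.symm)
    refine le_csSup ⟨Fintype.card (Set.univ : Set ((i : Fin (2 * t + 1)) × Fin (x i))), ?_⟩ ?_
    · rintro m ⟨s, hs, -⟩
      rw [← hs.card_eq]
      exact s.card_le_univ
    · exact ⟨Set.toFinset {w : (Set.univ : Set ((i : Fin (2 * t + 1)) × Fin (x i))) |
          w.1.1 = c ∨ w.1.1 = c + 1},
        (H.isNClique_iff).mpr ⟨hcl, hcardK⟩, Set.mem_toFinset.mpr (Or.inl hv)⟩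
  -- choose the index i
  have hXpos : 0 < X := by
    have h0 : x 0 ≤ ∑ i, x i :=
      Finset.single_le_sum (fun i _ => Nat.zero_le _) (Finset.mem_univ 0)
    have := hx 0
    omega
  have hsum : ∑ i : Fin (2*t+1), (x i + 4*x (i+1) + 6*x (i+1+1) + 4*x (i+1+1+1)) = 15 * X := by
    have e1 : ∑ i : Fin (2*t+1), x (i+1) = ∑ i, x i :=
      Fintype.sum_equiv (Equiv.addRight 1) _ _ (fun i => rfl)
    have e2 : ∑ i : Fin (2*t+1), x (i+1+1) = ∑ i, x (i+1) :=
      Fintype.sum_equiv (Equiv.addRight 1) (fun i => x (i+1+1)) (fun i => x (i+1)) (fun i => rfl)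
    have e3 : ∑ i : Fin (2*t+1), x (i+1+1+1) = ∑ i, x (i+1+1) :=
      Fintype.sum_equiv (Equiv.addRight 1) (fun i => x (i+1+1+1)) (fun i => x (i+1+1)) (fun i => rfl)
    rw [Finset.sum_add_distrib, Finset.sum_add_distrib, Finset.sum_add_distrib,
      ← Finset.mul_sum, ← Finset.mul_sum, ← Finset.mul_sum, e3, e2, e1, ← hX]
    ring
  have hex : ∃ i : Fin (2*t+1),
      15 * X ≤ (2*t+1) * (x i + 4*x (i+1) + 6*x (i+1+1) + 4*x (i+1+1+1)) := by
    by_contra hc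
    push_neg at hc
    have hb : ∀ i ∈ (Finset.univ : Finset (Fin (2*t+1))),
        (2*t+1) * (x i + 4*x (i+1) + 6*x (i+1+1) + 4*x (i+1+1+1)) ≤ 15*X - 1 := by
      intro i _
      have := hc i
      omega
    have hs2 := Finset.sum_le_card_nsmul _ _ _ hb
    rw [← Finset.mul_sum, hsum, Finset.card_univ, Fintype.card_fin, smul_eq_mul] at hs2
    have h3 : (2*t+1) * (15*X - 1) < (2*t+1)*(15*X) :=
      mul_lt_mul_of_pos_left (by omega) (by omega)
    omega
  obtain ⟨i, hi⟩ := hex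
  -- the triangle
  obtain ⟨ua, ub, uc, hua, hub, huc, hbc'⟩ :
      ∃ a b c : (i : Fin (2 * t + 1)) × Fin (x i),
        a.1 = i+1 ∧ b.1 = i+1+1 ∧ c.1 = i+1+1 ∧ b ≠ c := by
    refine ⟨⟨i+1, ⟨0, by have := hx (i+1); omega⟩⟩,
      ⟨i+1+1, ⟨0, by have := hx (i+1+1); omega⟩⟩,
      ⟨i+1+1, ⟨1, by have := hx (i+1+1); omega⟩⟩, rfl, rfl, rfl, ?_⟩
    intro h
    simp only [Sigma.mk.inj_iff, heq_eq_eq, Fin.mk.injEq, true_and] at h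
    omega
  have hab' : ua ≠ ub := by
    intro h
    exact fin_succ_ne ht (i+1) (by rw [← hub, ← h, hua])
  have hac' : ua ≠ uc := by
    intro h
    exact fin_succ_ne ht (i+1) (by rw [← huc, ← h, hua])
  set va : (Set.univ : Set ((i : Fin (2 * t + 1)) × Fin (x i))) := ⟨ua, Set.mem_univ ua⟩ with hva
  set vb : (Set.univ : Set ((i : Fin (2 * t + 1)) × Fin (x i))) := ⟨ub, Set.mem_univ ub⟩ with hvb
  set vc : (Set.univ : Set ((i : Fin (2 * t + 1)) × Fin (x i))) := ⟨uc, Set.mem_univ uc⟩ with hvc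
  have hvab : va ≠ vb := fun h => hab' (congrArg Subtype.val h)
  have hvac : va ≠ vc := fun h => hac' (congrArg Subtype.val h)
  have hvbc : vb ≠ vc := fun h => hbc' (congrArg Subtype.val h)
  set T : Finset (Set.univ : Set ((i : Fin (2 * t + 1)) × Fin (x i))) := {va, vb, vc} with hT
  have hcardT : T.card = 3 := by
    rw [hT, Finset.card_insert_of_notMem (by simp [hvab, hvac]),
      Finset.card_insert_of_notMem (by simp [hvbc]), Finset.card_singleton]
  have hAdjab : H.Adj va vb := (lineAdj_iff G hG ua ub).mpr
    ⟨hab', Or.inr (Or.inr (by rw [hub, hua]))⟩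
  have hAdjac : H.Adj va vc := (lineAdj_iff G hG ua uc).mpr
    ⟨hac', Or.inr (Or.inr (by rw [huc, hua]))⟩
  have hAdjbc : H.Adj vb vc := (lineAdj_iff G hG ub uc).mpr
    ⟨hbc', Or.inl (hub.trans huc.symm)⟩
  have hcliqueT : H.IsClique ↑T := by
    have hcoe : (↑T : Set _) = {va, vb, vc} := by
      rw [hT]; simp
    rw [hcoe, SimpleGraph.isClique_insert, SimpleGraph.isClique_insert]
    refine ⟨⟨?_, ?_⟩, ?_⟩
    · exact Set.pairwise_singleton _ _
    · rintro b hb -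
      rw [Set.mem_singleton_iff] at hb
      rw [hb]
      exact hAdjbc
    · rintro b hb -
      rcases hb with hb | hb
      · rw [hb]; exact hAdjab
      · rw [Set.mem_singleton_iff] at hb
        rw [hb]; exact hAdjac
  -- degree/clique bounds for the three vertices
  have hda : x i + x (i+1) + x (i+1+1) ≤ ndeg H va + 1 := by
    rw [hndeg_eq va]
    exact hdeg_ge i ua hua
  have hdb : x (i+1) + x (i+1+1) + x (i+1+1+1) ≤ ndeg H vb + 1 := by
    rw [hndeg_eq vb]
    exact hdeg_ge (i+1) ub hub
  have hdc : x (i+1) + x (i+1+1) + x (i+1+1+1) ≤ ndeg H vc + 1 := by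
    rw [hndeg_eq vc]
    exact hdeg_ge (i+1) uc huc
  have hca : x (i+1) + x (i+1+1) ≤ cliqueAt H va := hclique_ge (i+1) va hua
  have hcb : x (i+1+1) + x (i+1+1+1) ≤ cliqueAt H vb := hclique_ge (i+1+1) vb hub
  have hcc : x (i+1+1) + x (i+1+1+1) ≤ cliqueAt H vc := hclique_ge (i+1+1) vc huc
  -- value of gammaVal on T
  have hVT : ((x i + 4*x (i+1) + 6*x (i+1+1) + 4*x (i+1+1+1) : ℕ) : ℝ) / 6
      ≤ gammaVal H T := by
    have hsumT : ∑ v ∈ T, ((ndeg H v : ℝ) + (cliqueAt H v : ℝ) + 1) / 2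
        = ((ndeg H va : ℝ) + (cliqueAt H va : ℝ) + 1) / 2
        + ((ndeg H vb : ℝ) + (cliqueAt H vb : ℝ) + 1) / 2
        + ((ndeg H vc : ℝ) + (cliqueAt H vc : ℝ) + 1) / 2 := by
      rw [hT, Finset.sum_insert (by simp [hvab, hvac]),
        Finset.sum_insert (by simp [hvbc]), Finset.sum_singleton]
      ring
    rw [gammaVal, hcardT, hsumT]
    have r1 : (x i : ℝ) + x (i+1) + x (i+1+1) ≤ (ndeg H va : ℝ) + 1 := by exact_mod_cast hda
    have r2 : (x (i+1) : ℝ) + x (i+1+1) + x (i+1+1+1) ≤ (ndeg H vb : ℝ) + 1 := by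
      exact_mod_cast hdb
    have r3 : (x (i+1) : ℝ) + x (i+1+1) + x (i+1+1+1) ≤ (ndeg H vc : ℝ) + 1 := by
      exact_mod_cast hdc
    have r4 : (x (i+1) : ℝ) + x (i+1+1) ≤ (cliqueAt H va : ℝ) := by exact_mod_cast hca
    have r5 : (x (i+1+1) : ℝ) + x (i+1+1+1) ≤ (cliqueAt H vb : ℝ) := by exact_mod_cast hcb
    have r6 : (x (i+1+1) : ℝ) + x (i+1+1+1) ≤ (cliqueAt H vc : ℝ) := by exact_mod_cast hcc
    push_cast
    linarith
  -- chain of inequalities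
  have hstep2 : gammaVal H T ≤ gamma H 3 := by
    apply le_csSup
    · refine ⟨(Fintype.card (Set.univ : Set ((i : Fin (2 * t + 1)) × Fin (x i))) : ℝ) + 1, ?_⟩
      rintro y ⟨s, -, rfl⟩
      exact gammaVal_le_card H s
    · exact ⟨T, Or.inl ⟨hcliqueT, hcardT⟩, rfl⟩
  have hstep1 : gamma H 3 ≤ gammaTilde Q 3 := by
    apply le_csSup
    · refine ⟨(Fintype.card ((i : Fin (2 * t + 1)) × Fin (x i)) : ℝ) + 1, ?_⟩
      rintro y ⟨s, H', -, rfl⟩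
      calc gamma H' 3 ≤ (Fintype.card s : ℝ) + 1 := gamma_le_card H' 3
        _ ≤ (Fintype.card ((i : Fin (2 * t + 1)) × Fin (x i)) : ℝ) + 1 := by
            have hle : Fintype.card s ≤ Fintype.card ((i : Fin (2 * t + 1)) × Fin (x i)) := by
              rw [← Nat.card_eq_fintype_card, ← Nat.card_eq_fintype_card]
              exact Nat.card_le_card_of_injective Subtype.val Subtype.val_injective
            have : (Fintype.card s : ℝ) ≤ Fintype.card ((i : Fin (2 * t + 1)) × Fin (x i)) := by
              exact_mod_cast hle
            linarith
    · exact ⟨Set.univ, H, le_refl _, rfl⟩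
  have hfinal : (5 * X : ℝ) / (4 * t + 2)
      ≤ ((x i + 4*x (i+1) + 6*x (i+1+1) + 4*x (i+1+1+1) : ℕ) : ℝ) / 6 := by
    rw [div_le_div_iff₀ (by positivity) (by norm_num)]
    have hiR : (15 * X : ℝ) ≤ (2*t+1) * ((x i + 4*x (i+1) + 6*x (i+1+1) + 4*x (i+1+1+1) : ℕ) : ℝ) := by
      exact_mod_cast hi
    push_cast at hiR ⊢
    linarith
  linarith [hVT, hstep2, hstep1, hfinal]
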